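/- Suppose P is a monic polynomial of degree n all of whose zeros lie on the unit circle and |P'(z)| > n for all z on the unit circle. Then a contradiction follows; equivalently, every monic degree-n polynomial with all zeros on the unit circle satisfies min_{|z|=1} |P'(z)| ≤ n. -/

import Mathlib

open Complex Polynomial Metric

theorem exists_deriv_le (n : ℕ) (hn : 1 ≤ n) (t : Fin n → ℝ) (P : ℂ → ℂ)
    (hP : P = fun z => ∏ j, (z - Complex.exp (t j * Complex.I))) :
    ∃ z : ℂ, ‖z‖ = 1 ∧ ‖deriv P z‖ ≤ n := by
  by_contra hcon
  push_neg at hcon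
  set w : Fin n → ℂ := fun j => Complex.exp (t j * Complex.I) with hw
  have hwabs : ∀ j, ‖w j‖ = 1 := fun j => Complex.norm_exp_ofReal_mul_I (t j)
  set p : Polynomial ℂ := ∏ j, (X - C (w j)) with hp
  have hPp : P = fun z => p.eval z := by
    funext z; simp [hP, hp, eval_prod, hw]
  have hderiv : ∀ z, deriv P z = p.derivative.eval z := by
    intro z; rw [hPp]; exact Polynomial.deriv (p := p)
  -- P' has no zeros outside the closed unit disk
  have hne : ∀ z : ℂ, 1 < ‖z‖ → p.derivative.eval z ≠ 0 := by
    intro z hz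
    have hsub : ∀ j, z - w j ≠ 0 := by
      intro j h
      rw [sub_eq_zero] at h
      rw [h, hwabs j] at hz
      exact lt_irrefl _ hz
    have hPz : (∏ j, (z - w j)) ≠ 0 := Finset.prod_ne_zero_iff.2 fun j _ => hsub j
    -- logDeriv computation
    have hld : logDeriv P z = ∑ j, (z - w j)⁻¹ := by
      rw [hP]
      rw [logDeriv_prod]
      · refine Finset.sum_congr rfl fun j _ => ?_
        rw [logDeriv_apply]
        simp [deriv_sub_const, hw]
      · intro j _; exact hsub j
      · intro j _; exact (differentiable_id.sub_const _).differentiableAt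
    have hdP : deriv P z = (∏ j, (z - w j)) * ∑ j, (z - w j)⁻¹ := by
      have := hld
      rw [logDeriv_apply, hP] at this
      have hPzval : (fun z => ∏ j, (z - Complex.exp (t j * Complex.I))) z = ∏ j, (z - w j) := by
        simp [hw]
      rw [div_eq_iff (hPzval ▸ hPz)] at this
      rw [hP, this, hPzval, mul_comm]
    -- the sum is nonzero: Re (z * sum) > 0
    have hsum : (∑ j, (z - w j)⁻¹) ≠ 0 := by
      intro h0
      have hre : 0 < (z * ∑ j, (z - w j)⁻¹).re := by
        rw [Finset.mul_sum]
        rw [Complex.re_sum]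
        apply Finset.sum_pos
        · intro j _
          have hterm : z * (z - w j)⁻¹
              = (z * (starRingEnd ℂ) (z - w j)) * ((Complex.normSq (z - w j))⁻¹ : ℝ) := by
            rw [Complex.inv_def]; ring
          rw [hterm]
          have h1 : ((z * (starRingEnd ℂ) (z - w j)) * ((Complex.normSq (z - w j))⁻¹ : ℝ)).re
              = (z * (starRingEnd ℂ) (z - w j)).re * (Complex.normSq (z - w j))⁻¹ := by
            simp [Complex.mul_re, Complex.ofReal_re, Complex.ofReal_im]
          rw [h1]
          apply mul_pos
          · have h2 : (z * (starRingEnd ℂ) (z - w j)).re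
                = Complex.normSq z - (z * (starRingEnd ℂ) (w j)).re := by
              rw [map_sub, mul_sub, Complex.sub_re, Complex.mul_conj]
              simp
            rw [h2]
            have h3 : (z * (starRingEnd ℂ) (w j)).re ≤ ‖z‖ := by
              calc (z * (starRingEnd ℂ) (w j)).re ≤ ‖z * (starRingEnd ℂ) (w j)‖ :=
                    Complex.re_le_norm _
                _ = ‖z‖ := by rw [norm_mul, Complex.norm_conj, hwabs j, mul_one]
            have h4 : ‖z‖ < Complex.normSq z - ‖z‖ + ‖z‖ := by
              rw [Complex.normSq_eq_norm_sq]
              nlinarith [norm_nonneg z]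
            linarith
          · exact inv_pos.2 (Complex.normSq_pos.2 (hsub j))
        · exact ⟨⟨0, hn⟩, Finset.mem_univ _⟩
      rw [h0, mul_zero] at hre
      exact lt_irrefl _ hre
    rw [← hderiv z] at *
    rw [hdP]
    exact mul_ne_zero hPz hsum
  -- basic facts about p
  have hn0 : (0:ℝ) < n := by exact_mod_cast hn
  have hmonic : p.Monic := monic_prod_of_monic _ _ fun j _ => monic_X_sub_C _
  have hdeg : p.natDegree = n := by
    rw [hp, natDegree_prod _ _ fun j _ => X_sub_C_ne_zero (w j)]
    simp
  have hcoeff : p.derivative.coeff (n - 1) = n := by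
    rw [coeff_derivative]
    have h1 : n - 1 + 1 = n := Nat.succ_pred_eq_of_pos hn
    rw [h1]
    rw [← hdeg, hmonic.coeff_natDegree, one_mul, hdeg]
    exact_mod_cast congrArg (Nat.cast : ℕ → ℂ) (by omega : n - 1 + 1 = n)
  have hdd : p.derivative.natDegree = n - 1 := by
    apply le_antisymm
    · calc p.derivative.natDegree ≤ p.natDegree - 1 := natDegree_derivative_le p
        _ = n - 1 := by rw [hdeg]
    · apply le_natDegree_of_ne_zero
      rw [hcoeff]
      exact_mod_cast hn0.ne'
  have hlead : p.derivative.leadingCoeff = n := by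
    rw [leadingCoeff, hdd, hcoeff]
  set Q : Polynomial ℂ := p.derivative.reverse with hQdef
  have hQ0 : Q.eval 0 = n := by
    rw [← coeff_zero_eq_eval_zero, hQdef, coeff_zero_reverse, hlead]
  have hQeval : ∀ u : ℂ, u ≠ 0 → Q.eval u = p.derivative.eval u⁻¹ * u ^ (n - 1) := by
    intro u hu
    letI : Invertible (u⁻¹) := invertibleOfNonzero (inv_ne_zero hu)
    have h := eval₂_reverse_mul_pow (RingHom.id ℂ) u⁻¹ p.derivative
    rw [invOf_eq_inv, inv_inv] at h
    rw [hdd] at h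
    rw [show eval₂ (RingHom.id ℂ) u p.derivative.reverse = Q.eval u from rfl] at h
    rw [show eval₂ (RingHom.id ℂ) u⁻¹ p.derivative = p.derivative.eval u⁻¹ from rfl] at h
    rw [← h, mul_assoc, ← mul_pow, inv_mul_cancel₀ hu, one_pow, mul_one]
  -- Q is nonvanishing on the closed unit ball
  have hQne : ∀ u ∈ closedBall (0:ℂ) 1, Q.eval u ≠ 0 := by
    intro u hu
    by_cases hu0 : u = 0
    · rw [hu0, hQ0]
      exact_mod_cast hn0.ne'
    · have habs : ‖u‖ ≤ 1 := by
        simpa [Complex.dist_eq] using mem_closedBall.1 hu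
      have habsinv : 1 ≤ ‖u⁻¹‖ := by
        rw [norm_inv]
        exact (one_le_inv₀ (norm_pos_iff.2 hu0)).2 habs
      rw [hQeval u hu0]
      apply mul_ne_zero _ (pow_ne_zero _ hu0)
      rcases lt_or_eq_of_le habsinv with h | h
      · exact hne _ h
      · have := hcon u⁻¹ h.symm
        rw [hderiv] at this
        intro hcontra
        rw [hcontra] at this
        simp at this
        linarith
  -- the reciprocal of Q
  set g : ℂ → ℂ := fun u => (Q.eval u)⁻¹ with hg
  have hgd : DiffContOnCl ℂ g (ball (0:ℂ) 1) := by
    apply DifferentiableOn.diffContOnCl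
    rw [closure_ball (0:ℂ) one_ne_zero]
    exact ((Q.differentiable).differentiableOn).inv hQne
  -- minimum of |Q| on the sphere
  obtain ⟨u₀, hu₀mem, hu₀min⟩ := (isCompact_sphere (0:ℂ) 1).exists_isMinOn
    ⟨1, by simp⟩ ((continuous_norm.comp (Q.continuous)).continuousOn)
  have hu₀abs : ‖u₀‖ = 1 := by
    simpa [Complex.dist_eq] using mem_sphere.1 hu₀mem
  have hu₀ne : u₀ ≠ 0 := by
    intro h; rw [h] at hu₀abs; simp at hu₀abs
  set m : ℝ := ‖Q.eval u₀‖ with hm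
  have hnm : (n:ℝ) < m := by
    rw [hm, hQeval u₀ hu₀ne, norm_mul, norm_pow, hu₀abs, one_pow, mul_one]
    have hinv : ‖u₀⁻¹‖ = 1 := by rw [norm_inv, hu₀abs, inv_one]
    have := hcon u₀⁻¹ hinv
    rw [hderiv] at this
    exact this
  have hmpos : 0 < m := lt_trans hn0 hnm
  -- boundary bound for g
  have hbound : ∀ z ∈ frontier (ball (0:ℂ) 1), ‖g z‖ ≤ m⁻¹ := by
    intro z hz
    rw [frontier_ball (0:ℂ) one_ne_zero] at hz
    have hmin : m ≤ ‖Q.eval z‖ := hu₀min hz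
    rw [hg]
    simp only [norm_inv]
    exact inv_anti₀ hmpos hmin
  have h00 : (0:ℂ) ∈ closure (ball (0:ℂ) 1) := by
    rw [closure_ball (0:ℂ) one_ne_zero]
    exact mem_closedBall_self zero_le_one
  have hfinal := Complex.norm_le_of_forall_mem_frontier_norm_le isBounded_ball hgd hbound h00
  rw [hg] at hfinal
  simp only [norm_inv, hQ0] at hfinal
  rw [Complex.norm_natCast] at hfinal
  have : m ≤ n := (inv_le_inv₀ hn0 hmpos).1 hfinal
  linarith
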